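/- Let κ₁, κ₂ ∈ ℝ and let D : ℝ³ \ {0} → ℂ be the difference kernel D(x) = (exp(−ι κ₁ ‖x‖) − exp(−ι κ₂ ‖x‖)) / (4π ‖x‖). Then D is differentiable at every x ≠ 0, and there exists a constant C > 0 such that for all x with 0 < ‖x‖ ≤ 1, the operator norm of the Fréchet derivative of D at x is bounded by C. In particular, the difference of the gradients of the Helmholtz kernels for two wavenumbers (the double-layer kernel difference) is bounded near the origin. -/

import Mathlib

private lemma hd_exp (c : ℂ) (s : ℝ) :
    HasDerivAt (fun t : ℝ => Complex.exp (c * t)) (c * Complex.exp (c * s)) s := by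
  have h1 : HasDerivAt (fun t : ℝ => (t : ℂ)) 1 s := by simpa using (hasDerivAt_id _).ofReal_comp
  simpa [mul_comm] using (h1.const_mul c).cexp

private lemma norm_exp_I (κ s : ℝ) : ‖Complex.exp (-Complex.I * κ * s)‖ = 1 := by
  have h : (-Complex.I * κ * s : ℂ) = ((-(κ * s) : ℝ) : ℂ) * Complex.I := by push_cast; ring
  rw [h, Complex.norm_exp_ofReal_mul_I]

private lemma h_bound (κ₁ κ₂ : ℝ) {r : ℝ} (hr : 0 ≤ r) :
    ‖(r : ℂ) * ((-Complex.I * κ₁) * Complex.exp (-Complex.I * κ₁ * r) -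
          (-Complex.I * κ₂) * Complex.exp (-Complex.I * κ₂ * r)) -
        (Complex.exp (-Complex.I * κ₁ * r) - Complex.exp (-Complex.I * κ₂ * r))‖
      ≤ (κ₁ ^ 2 + κ₂ ^ 2) * r * r := by
  set c₁ : ℂ := -Complex.I * κ₁ with hc₁
  set c₂ : ℂ := -Complex.I * κ₂ with hc₂
  set h : ℝ → ℂ := fun s => (s : ℂ) * (c₁ * Complex.exp (c₁ * s) - c₂ * Complex.exp (c₂ * s)) -
      (Complex.exp (c₁ * s) - Complex.exp (c₂ * s)) with hh
  have hder : ∀ s : ℝ, HasDerivAt h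
      ((s : ℂ) * (c₁ ^ 2 * Complex.exp (c₁ * s) - c₂ ^ 2 * Complex.exp (c₂ * s))) s := by
    intro s
    have h1 : HasDerivAt (fun t : ℝ => (t : ℂ)) 1 s := by simpa using (hasDerivAt_id _).ofReal_comp
    have hg1 : HasDerivAt (fun t : ℝ => c₁ * Complex.exp (c₁ * t) - c₂ * Complex.exp (c₂ * t))
        (c₁ * (c₁ * Complex.exp (c₁ * s)) - c₂ * (c₂ * Complex.exp (c₂ * s))) s :=
      ((hd_exp c₁ s).const_mul c₁).sub ((hd_exp c₂ s).const_mul c₂)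
    have hg : HasDerivAt (fun t : ℝ => Complex.exp (c₁ * t) - Complex.exp (c₂ * t))
        (c₁ * Complex.exp (c₁ * s) - c₂ * Complex.exp (c₂ * s)) s :=
      (hd_exp c₁ s).sub (hd_exp c₂ s)
    have := (h1.mul hg1).sub hg
    convert this using 1
    · rfl
    · rfl
    ring
  have hb : ∀ s ∈ Set.Ico (0 : ℝ) r,
      ‖(s : ℂ) * (c₁ ^ 2 * Complex.exp (c₁ * s) - c₂ ^ 2 * Complex.exp (c₂ * s))‖
        ≤ (κ₁ ^ 2 + κ₂ ^ 2) * r := by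
    intro s hs
    have e1 : ‖Complex.exp (c₁ * s)‖ = 1 := norm_exp_I κ₁ s
    have e2 : ‖Complex.exp (c₂ * s)‖ = 1 := norm_exp_I κ₂ s
    have nc1 : ‖c₁‖ = |κ₁| := by
      rw [hc₁, norm_mul, norm_neg, Complex.norm_I, Complex.norm_real]; simp
    have nc2 : ‖c₂‖ = |κ₂| := by
      rw [hc₂, norm_mul, norm_neg, Complex.norm_I, Complex.norm_real]; simp
    calc ‖(s : ℂ) * (c₁ ^ 2 * Complex.exp (c₁ * s) - c₂ ^ 2 * Complex.exp (c₂ * s))‖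
        = |s| * ‖c₁ ^ 2 * Complex.exp (c₁ * s) - c₂ ^ 2 * Complex.exp (c₂ * s)‖ := by
          rw [norm_mul, Complex.norm_real]; rfl
      _ ≤ |s| * (‖c₁ ^ 2 * Complex.exp (c₁ * s)‖ + ‖c₂ ^ 2 * Complex.exp (c₂ * s)‖) :=
          mul_le_mul_of_nonneg_left (norm_sub_le _ _) (abs_nonneg s)
      _ = |s| * (κ₁ ^ 2 + κ₂ ^ 2) := by
          rw [norm_mul, norm_mul, norm_pow, norm_pow, nc1, nc2, e1, e2, sq_abs, sq_abs]
          ring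
      _ ≤ r * (κ₁ ^ 2 + κ₂ ^ 2) :=
          mul_le_mul_of_nonneg_right (by rw [abs_of_nonneg hs.1]; exact hs.2.le) (by positivity)
      _ = (κ₁ ^ 2 + κ₂ ^ 2) * r := by ring
  have key := norm_image_sub_le_of_norm_deriv_le_segment'
      (f := h) (f' := fun s => (s : ℂ) * (c₁ ^ 2 * Complex.exp (c₁ * s) - c₂ ^ 2 * Complex.exp (c₂ * s)))
      (C := (κ₁ ^ 2 + κ₂ ^ 2) * r)
      (fun s _ => (hder s).hasDerivWithinAt) hb r (Set.right_mem_Icc.2 hr)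
  have h0 : h 0 = 0 := by simp [hh]
  rw [h0, sub_zero, sub_zero] at key
  calc ‖h r‖ ≤ (κ₁ ^ 2 + κ₂ ^ 2) * r * r := key

private lemma F_hasDerivAt (κ₁ κ₂ : ℝ) {r : ℝ} (hr : 0 < r) :
    HasDerivAt (fun s : ℝ => (Complex.exp (-Complex.I * κ₁ * s) - Complex.exp (-Complex.I * κ₂ * s)) /
        (4 * (Real.pi : ℂ) * s))
      ((((-Complex.I * κ₁) * Complex.exp (-Complex.I * κ₁ * r) -
          (-Complex.I * κ₂) * Complex.exp (-Complex.I * κ₂ * r)) * (4 * (Real.pi : ℂ) * r) -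
        (Complex.exp (-Complex.I * κ₁ * r) - Complex.exp (-Complex.I * κ₂ * r)) * (4 * (Real.pi : ℂ))) /
        (4 * (Real.pi : ℂ) * r) ^ 2) r := by
  have h1 : HasDerivAt (fun t : ℝ => (t : ℂ)) 1 r := by simpa using (hasDerivAt_id _).ofReal_comp
  have hden : HasDerivAt (fun s : ℝ => 4 * (Real.pi : ℂ) * (s : ℂ)) (4 * (Real.pi : ℂ)) r := by
    simpa using h1.const_mul (4 * (Real.pi : ℂ))
  have hnum := (hd_exp (-Complex.I * κ₁) r).sub (hd_exp (-Complex.I * κ₂) r)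
  have hne : (4 * (Real.pi : ℂ) * (r : ℂ)) ≠ 0 := by
    refine mul_ne_zero (mul_ne_zero (by norm_num) ?_) ?_
    · exact Complex.ofReal_ne_zero.2 Real.pi_ne_zero
    · exact Complex.ofReal_ne_zero.2 hr.ne'
  exact hnum.div hden hne

private lemma deriv_norm_le (κ₁ κ₂ : ℝ) {r : ℝ} (hr : 0 < r) :
    ‖(((-Complex.I * κ₁) * Complex.exp (-Complex.I * κ₁ * r) -
          (-Complex.I * κ₂) * Complex.exp (-Complex.I * κ₂ * r)) * (4 * (Real.pi : ℂ) * r) -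
        (Complex.exp (-Complex.I * κ₁ * r) - Complex.exp (-Complex.I * κ₂ * r)) * (4 * (Real.pi : ℂ))) /
        (4 * (Real.pi : ℂ) * r) ^ 2‖ ≤ (κ₁ ^ 2 + κ₂ ^ 2) / (4 * Real.pi) := by
  have hpi := Real.pi_pos
  have hnum : (((-Complex.I * κ₁) * Complex.exp (-Complex.I * κ₁ * r) -
          (-Complex.I * κ₂) * Complex.exp (-Complex.I * κ₂ * r)) * (4 * (Real.pi : ℂ) * r) -
        (Complex.exp (-Complex.I * κ₁ * r) - Complex.exp (-Complex.I * κ₂ * r)) * (4 * (Real.pi : ℂ)))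
      = (4 * (Real.pi : ℂ)) *
        ((r : ℂ) * ((-Complex.I * κ₁) * Complex.exp (-Complex.I * κ₁ * r) -
            (-Complex.I * κ₂) * Complex.exp (-Complex.I * κ₂ * r)) -
          (Complex.exp (-Complex.I * κ₁ * r) - Complex.exp (-Complex.I * κ₂ * r))) := by ring
  rw [hnum, norm_div, norm_mul, norm_pow]
  have n1 : ‖(4 * (Real.pi : ℂ))‖ = 4 * Real.pi := by
    rw [show (4 * (Real.pi : ℂ)) = ((4 * Real.pi : ℝ) : ℂ) by push_cast; ring, Complex.norm_real,
      Real.norm_eq_abs, abs_of_pos (by positivity)]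
  have n2 : ‖(4 * (Real.pi : ℂ) * r)‖ = 4 * Real.pi * r := by
    rw [show (4 * (Real.pi : ℂ) * r) = ((4 * Real.pi * r : ℝ) : ℂ) by push_cast; ring,
      Complex.norm_real, Real.norm_eq_abs, abs_of_pos (by positivity)]
  rw [n1, n2]
  have hb := h_bound κ₁ κ₂ hr.le
  calc 4 * Real.pi * ‖(r : ℂ) * ((-Complex.I * κ₁) * Complex.exp (-Complex.I * κ₁ * r) -
            (-Complex.I * κ₂) * Complex.exp (-Complex.I * κ₂ * r)) -
          (Complex.exp (-Complex.I * κ₁ * r) - Complex.exp (-Complex.I * κ₂ * r))‖ /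
        (4 * Real.pi * r) ^ 2
      ≤ 4 * Real.pi * ((κ₁ ^ 2 + κ₂ ^ 2) * r * r) / (4 * Real.pi * r) ^ 2 := by
        gcongr
    _ = (κ₁ ^ 2 + κ₂ ^ 2) / (4 * Real.pi) := by
        field_simp

/-- The difference kernel D of the Helmholtz fundamental solutions for two
wavenumbers is differentiable away from the origin, and its Fréchet derivative is bounded
on the punctured unit ball: there is C > 0 with ‖D′(x)‖ ≤ C for 0 < ‖x‖ ≤ 1. -/
theorem helmholtz_kernel_difference_derivative_bounded
    (κ₁ κ₂ : ℝ) (D : EuclideanSpace ℝ (Fin 3) → ℂ)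
    (hD : ∀ x : EuclideanSpace ℝ (Fin 3), x ≠ 0 →
      D x = (Complex.exp (-(Complex.I) * (κ₁ : ℂ) * (‖x‖ : ℂ)) -
             Complex.exp (-(Complex.I) * (κ₂ : ℂ) * (‖x‖ : ℂ))) /
            (4 * (Real.pi : ℂ) * (‖x‖ : ℂ))) :
    (∀ x : EuclideanSpace ℝ (Fin 3), x ≠ 0 → DifferentiableAt ℝ D x) ∧
    ∃ C : ℝ, 0 < C ∧ ∀ x : EuclideanSpace ℝ (Fin 3), 0 < ‖x‖ → ‖x‖ ≤ 1 →
      ‖fderiv ℝ D x‖ ≤ C := by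
  have hpi := Real.pi_pos
  set F : ℝ → ℂ := fun s => (Complex.exp (-Complex.I * κ₁ * s) - Complex.exp (-Complex.I * κ₂ * s)) /
      (4 * (Real.pi : ℂ) * s) with hF
  -- For any x ≠ 0, the comparison function F ∘ norm has a Fréchet derivative at x
  have main : ∀ x : EuclideanSpace ℝ (Fin 3), x ≠ 0 →
      ((F ∘ fun y : EuclideanSpace ℝ (Fin 3) => ‖y‖) =ᶠ[nhds x] D) ∧
      HasFDerivAt (F ∘ fun y : EuclideanSpace ℝ (Fin 3) => ‖y‖)
        ((ContinuousLinearMap.smulRight (1 : ℝ →L[ℝ] ℝ)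
            ((((-Complex.I * κ₁) * Complex.exp (-Complex.I * κ₁ * ‖x‖) -
              (-Complex.I * κ₂) * Complex.exp (-Complex.I * κ₂ * ‖x‖)) * (4 * (Real.pi : ℂ) * ‖x‖) -
              (Complex.exp (-Complex.I * κ₁ * ‖x‖) - Complex.exp (-Complex.I * κ₂ * ‖x‖)) *
                (4 * (Real.pi : ℂ))) / (4 * (Real.pi : ℂ) * ‖x‖) ^ 2)).comp
          (fderiv ℝ (fun y : EuclideanSpace ℝ (Fin 3) => ‖y‖) x)) x := by
    intro x hx
    constructor
    · filter_upwards [IsOpen.mem_nhds isOpen_compl_singleton hx] with y hy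
      exact (hD y hy).symm
    · have hnx : (0 : ℝ) < ‖x‖ := norm_pos_iff.2 hx
      have hnormdiff : DifferentiableAt ℝ (fun y : EuclideanSpace ℝ (Fin 3) => ‖y‖) x :=
        (contDiffAt_norm (𝕜 := ℝ) (n := 1) hx).differentiableAt one_ne_zero
      exact (F_hasDerivAt κ₁ κ₂ hnx).hasFDerivAt.comp x hnormdiff.hasFDerivAt
  constructor
  · intro x hx
    obtain ⟨hev, hfd⟩ := main x hx
    exact hev.differentiableAt_iff.mp hfd.differentiableAt
  · refine ⟨(κ₁ ^ 2 + κ₂ ^ 2) / (4 * Real.pi) + 1, by positivity, ?_⟩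
    intro x hx0 hx1
    have hx : x ≠ 0 := norm_pos_iff.1 hx0
    obtain ⟨hev, hfd⟩ := main x hx
    rw [← hev.fderiv_eq, hfd.fderiv]
    have hlip : ‖fderiv ℝ (fun y : EuclideanSpace ℝ (Fin 3) => ‖y‖) x‖ ≤ 1 := by
      simpa using norm_fderiv_le_of_lipschitz ℝ (lipschitzWith_one_norm (E := EuclideanSpace ℝ (Fin 3))) (x₀ := x)
    calc ‖(ContinuousLinearMap.smulRight (1 : ℝ →L[ℝ] ℝ) _).comp
          (fderiv ℝ (fun y : EuclideanSpace ℝ (Fin 3) => ‖y‖) x)‖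
        ≤ ‖ContinuousLinearMap.smulRight (1 : ℝ →L[ℝ] ℝ)
            ((((-Complex.I * κ₁) * Complex.exp (-Complex.I * κ₁ * ‖x‖) -
              (-Complex.I * κ₂) * Complex.exp (-Complex.I * κ₂ * ‖x‖)) * (4 * (Real.pi : ℂ) * ‖x‖) -
              (Complex.exp (-Complex.I * κ₁ * ‖x‖) - Complex.exp (-Complex.I * κ₂ * ‖x‖)) *
                (4 * (Real.pi : ℂ))) / (4 * (Real.pi : ℂ) * ‖x‖) ^ 2)‖ *
          ‖fderiv ℝ (fun y : EuclideanSpace ℝ (Fin 3) => ‖y‖) x‖ :=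
        ContinuousLinearMap.opNorm_comp_le _ _
      _ ≤ ((κ₁ ^ 2 + κ₂ ^ 2) / (4 * Real.pi)) * 1 := by
          refine mul_le_mul ?_ hlip (norm_nonneg _) (by positivity)
          rw [ContinuousLinearMap.norm_smulRight_apply, norm_one, one_mul]
          exact deriv_norm_le κ₁ κ₂ hx0
      _ ≤ (κ₁ ^ 2 + κ₂ ^ 2) / (4 * Real.pi) + 1 := by linarith
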